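/- Let n ≥ 2 be an integer. Define the scaled stability region S_n^sc = {ν ∈ ℂ : |((n−1)/(2n−1))·ν^{n²} + (n/(2n−1))·ν^{(n−1)²}| ≤ 1} and let μ_n^−(ρ) = −1 − (n·ρ^{(n−1)²}·(1 − (1 − 1/n)·ρ^{2n−1}))/(2n−1). Then sup{|ν| : ν ∈ S_n^sc} equals ν_n*, the unique zero of μ_n^− in the interval [1, +∞). In particular the farthest point of S_n^sc from the origin is attained along the negative real axis. -/

import Mathlib

/-- The function `μ_n^−` from the analysis of the optimal third order SSP
Runge–Kutta methods with `n²` stages. -/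
noncomputable def munMinus (n : ℕ) (ρ : ℝ) : ℝ :=
  -1 - (n * ρ ^ ((n - 1) ^ 2) * (1 - (1 - 1 / (n : ℝ)) * ρ ^ (2 * n - 1))) / (2 * (n : ℝ) - 1)

/-- **Section 3.2.2 (equations (3.14)–(3.16) with Lemma 3.11).**
For `n ≥ 2`, the supremum of `|ν|` over the scaled stability region
`S_n^sc = {ν : |((n−1)/(2n−1))ν^{n²} + (n/(2n−1))ν^{(n−1)²}| ≤ 1}`
equals `ν_n*`, the unique zero of `μ_n^−` in `[1, ∞)`; moreover the farthest
point is attained on the negative real axis, i.e. `-ν_n* ∈ S_n^sc`. -/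
theorem ssp3_scaled_region_sup (n : ℕ) (hn : 2 ≤ n)
    (S : Set ℂ)
    (hS : S = {w : ℂ | ‖(((n : ℂ) - 1) / (2 * (n : ℂ) - 1)) * w ^ (n ^ 2) +
      ((n : ℂ) / (2 * (n : ℂ) - 1)) * w ^ ((n - 1) ^ 2)‖ ≤ 1})
    (ν : ℝ) (hν1 : 1 ≤ ν) (hν0 : munMinus n ν = 0)
    (huniq : ∀ ρ : ℝ, 1 ≤ ρ → munMinus n ρ = 0 → ρ = ν) :
    sSup ((fun z : ℂ => ‖z‖) '' S) = ν ∧ ((-ν : ℝ) : ℂ) ∈ S := by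
  clear huniq
  have hn2 : (2:ℝ) ≤ (n:ℝ) := by exact_mod_cast hn
  have hc : (0:ℝ) < 2*(n:ℝ) - 1 := by linarith
  have hnne : (n:ℝ) ≠ 0 := by positivity
  -- exponent identity
  have hme : (n-1)^2 + (2*n-1) = n^2 := by
    obtain ⟨a, rfl⟩ : ∃ a, n = a + 1 := ⟨n-1, by omega⟩
    simp only [Nat.add_sub_cancel]
    have h2 : 2*(a+1) - 1 = 2*a + 1 := by omega
    rw [h2]; ring
  have hν0' : ((n:ℝ)-1) * ν ^ (n^2) - n * ν ^ ((n-1)^2) = 2*(n:ℝ) - 1 := by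
    have hpow : ν ^ (n^2) = ν ^ ((n-1)^2) * ν ^ (2*n-1) := by rw [← pow_add, hme]
    unfold munMinus at hν0
    field_simp at hν0
    rw [hpow]
    have hne : ((n:ℝ) * 2 - 1) ≠ 0 := by linarith
    have hq : ν ^ (n - 1) ^ 2 * ((n:ℝ) - ((n:ℝ) - 1) * ν ^ (2 * n - 1)) / ((n:ℝ) * 2 - 1) = -1 := by linarith
    rw [div_eq_iff hne] at hq
    nlinarith [hq]
  have hνpos : (0:ℝ) < ν := by linarith
  -- growth lemma
  have hub : ∀ r : ℝ, ν < r → 2*(n:ℝ) - 1 < ((n:ℝ)-1) * r ^ (n^2) - n * r ^ ((n-1)^2) := by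
    intro r hr
    have hpowr : r ^ (n^2) = r ^ ((n-1)^2) * r ^ (2*n-1) := by rw [← pow_add, hme]
    have hpowv : ν ^ (n^2) = ν ^ ((n-1)^2) * ν ^ (2*n-1) := by rw [← pow_add, hme]
    have hνm : (0:ℝ) < ν ^ ((n-1)^2) := by positivity
    have hfac : (((n:ℝ)-1) * ν ^ (2*n-1) - n) * ν ^ ((n-1)^2) = 2*(n:ℝ) - 1 := by
      rw [hpowv] at hν0'; linarith [hν0']
    have hfacpos : 0 < ((n:ℝ)-1) * ν ^ (2*n-1) - n := by
      nlinarith [hfac, hνm]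
    have h1 : ν ^ (2*n-1) < r ^ (2*n-1) :=
      pow_lt_pow_left₀ hr (le_of_lt hνpos) (by omega)
    have h2 : ν ^ ((n-1)^2) ≤ r ^ ((n-1)^2) :=
      pow_le_pow_left₀ (le_of_lt hνpos) (le_of_lt hr) _
    have h3 : ((n:ℝ)-1) * ν ^ (2*n-1) - n < ((n:ℝ)-1) * r ^ (2*n-1) - n := by
      have : (0:ℝ) < (n:ℝ) - 1 := by linarith
      nlinarith
    rw [hpowr]
    nlinarith [hfac, hfacpos, h1, h2, h3, hνm]
  -- membership of -ν
  have habs1 : |((n:ℝ)-1)/(2*(n:ℝ)-1) * (-ν) ^ (n^2) + (n:ℝ)/(2*(n:ℝ)-1) * (-ν) ^ ((n-1)^2)| = 1 := by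
    have hval : ((n:ℝ)-1) * (-ν) ^ (n^2) + (n:ℝ) * (-ν) ^ ((n-1)^2) =
        (-1:ℝ)^n * (2*(n:ℝ)-1) := by
      rcases Nat.even_or_odd n with he | ho
      · have hen2 : Even (n^2) := Nat.even_pow.mpr ⟨he, by norm_num⟩
        have hon1 : Odd (n-1) := by
          rcases he with ⟨k, hk⟩; exact ⟨k-1, by omega⟩
        have hom : Odd ((n-1)^2) := hon1.pow
        rw [hen2.neg_pow, hom.neg_pow, he.neg_one_pow]
        linarith [hν0']
      · have hon2 : Odd (n^2) := ho.pow
        have hen1 : Even (n-1) := by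
          rcases ho with ⟨k, hk⟩; exact ⟨k, by omega⟩
        have hem : Even ((n-1)^2) := Nat.even_pow.mpr ⟨hen1, by norm_num⟩
        rw [hon2.neg_pow, hem.neg_pow, ho.neg_one_pow]
        linarith [hν0']
    have : ((n:ℝ)-1)/(2*(n:ℝ)-1) * (-ν) ^ (n^2) + (n:ℝ)/(2*(n:ℝ)-1) * (-ν) ^ ((n-1)^2)
        = (-1:ℝ)^n := by
      field_simp
      rw [div_eq_iff (by linarith)]
      linarith [hval]
    rw [this, abs_pow, abs_neg, abs_one, one_pow]
  have hmemS : ((-ν : ℝ) : ℂ) ∈ S := by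
    rw [hS]
    show ‖_‖ ≤ 1
    have hcast : (((n : ℂ) - 1) / (2 * (n : ℂ) - 1)) * ((-ν : ℝ) : ℂ) ^ (n ^ 2) +
        ((n : ℂ) / (2 * (n : ℂ) - 1)) * ((-ν : ℝ) : ℂ) ^ ((n - 1) ^ 2) =
        ((((n:ℝ)-1)/(2*(n:ℝ)-1) * (-ν) ^ (n^2) + (n:ℝ)/(2*(n:ℝ)-1) * (-ν) ^ ((n-1)^2) : ℝ) : ℂ) := by
      push_cast
      ring
    rw [hcast, Complex.norm_real, Real.norm_eq_abs, habs1]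
  -- upper bound
  have hubS : ∀ w ∈ S, ‖w‖ ≤ ν := by
    intro w hw
    by_contra hcon
    push_neg at hcon
    rw [hS] at hw
    have hw' : ‖(((n : ℂ) - 1) / (2 * (n : ℂ) - 1)) * w ^ (n ^ 2) +
      ((n : ℂ) / (2 * (n : ℂ) - 1)) * w ^ ((n - 1) ^ 2)‖ ≤ 1 := hw
    set r := ‖w‖ with hr
    have hrν : ν < r := hcon
    have hca : ‖((n : ℂ) - 1) / (2 * (n : ℂ) - 1)‖ = ((n:ℝ)-1)/(2*(n:ℝ)-1) := by
      have : ((n : ℂ) - 1) / (2 * (n : ℂ) - 1) = ((((n:ℝ)-1)/(2*(n:ℝ)-1) : ℝ) : ℂ) := by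
        push_cast; ring
      rw [this, Complex.norm_real, Real.norm_eq_abs, abs_of_nonneg (div_nonneg (by linarith) (by linarith))]
    have hcb : ‖(n : ℂ) / (2 * (n : ℂ) - 1)‖ = (n:ℝ)/(2*(n:ℝ)-1) := by
      have : (n : ℂ) / (2 * (n : ℂ) - 1) = ((((n:ℝ))/(2*(n:ℝ)-1) : ℝ) : ℂ) := by
        push_cast; ring
      rw [this, Complex.norm_real, Real.norm_eq_abs, abs_of_nonneg (by positivity)]
    have htri : ((n:ℝ)-1)/(2*(n:ℝ)-1) * r ^ (n^2) ≤
        1 + (n:ℝ)/(2*(n:ℝ)-1) * r ^ ((n-1)^2) := by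
      have h1 : ‖(((n : ℂ) - 1) / (2 * (n : ℂ) - 1)) * w ^ (n ^ 2)‖ ≤
          ‖(((n : ℂ) - 1) / (2 * (n : ℂ) - 1)) * w ^ (n ^ 2) +
            ((n : ℂ) / (2 * (n : ℂ) - 1)) * w ^ ((n - 1) ^ 2)‖ +
          ‖((n : ℂ) / (2 * (n : ℂ) - 1)) * w ^ ((n - 1) ^ 2)‖ := by
        have := norm_add_le
          ((((n : ℂ) - 1) / (2 * (n : ℂ) - 1)) * w ^ (n ^ 2) +
            ((n : ℂ) / (2 * (n : ℂ) - 1)) * w ^ ((n - 1) ^ 2))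
          (-(((n : ℂ) / (2 * (n : ℂ) - 1)) * w ^ ((n - 1) ^ 2)))
        simpa using this
      rw [norm_mul, norm_mul, norm_pow, norm_pow, hca, hcb, ← hr] at h1
      linarith [hw', h1]
    have hkey := hub r hrν
    have : 2*(n:ℝ) - 1 < 2*(n:ℝ) - 1 := by
      have e1 : ((n:ℝ)-1) * r ^ (n^2) ≤ (2*(n:ℝ)-1) + (n:ℝ) * r ^ ((n-1)^2) := by
        have := mul_le_mul_of_nonneg_left htri (le_of_lt hc)
        rw [mul_add] at this
        calc ((n:ℝ)-1) * r ^ (n^2)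
            = (2*(n:ℝ)-1) * (((n:ℝ)-1)/(2*(n:ℝ)-1) * r ^ (n^2)) := by
              have hne : (n:ℝ) * 2 - 1 ≠ 0 := by linarith
              field_simp
          _ ≤ (2*(n:ℝ)-1) * 1 + (2*(n:ℝ)-1) * ((n:ℝ)/(2*(n:ℝ)-1) * r ^ ((n-1)^2)) := this
          _ = (2*(n:ℝ)-1) + (n:ℝ) * r ^ ((n-1)^2) := by field_simp
      linarith
    exact lt_irrefl _ this
  -- conclude
  have hνabs : ‖((-ν : ℝ) : ℂ)‖ = ν := by
    rw [Complex.norm_real, Real.norm_eq_abs, abs_neg, abs_of_nonneg (by linarith)]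
  have hmemimg : ν ∈ (fun z : ℂ => ‖z‖) '' S := ⟨((-ν : ℝ) : ℂ), hmemS, hνabs⟩
  have hubimg : ∀ x ∈ (fun z : ℂ => ‖z‖) '' S, x ≤ ν := by
    rintro x ⟨w, hw, rfl⟩
    exact hubS w hw
  refine ⟨le_antisymm (csSup_le ⟨ν, hmemimg⟩ hubimg) (le_csSup ⟨ν, hubimg⟩ hmemimg), hmemS⟩
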